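/- arXiv:1907.05221 — 2 statements merged into one kernel-verified Lean document; each statement's English description precedes it below -/
import Mathlib

section
/- Let (u, v, ρ, s) be a C² supersonic solution of the smooth-flow 2D steady full Euler system on U, with flow angle σ, Mach angle A ∈ (0, π/2), α = σ + A, κ = 2/(γ−1), j = c/(γ(γ−1)s), and ω = u_y − vₓ. Then along stream characteristics the vorticity satisfies ∂₀ω = (κω/c) ∂₀c − (2j ∂₊s / c) ∂₀c on U. -/
open Real

noncomputable section

/-- Partial derivative in the `x` direction. -/
def pdx (f : ℝ × ℝ → ℝ) (p : ℝ × ℝ) : ℝ := fderiv ℝ f p (1, 0)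

/-- Partial derivative in the `y` direction. -/
def pdy (f : ℝ × ℝ → ℝ) (p : ℝ × ℝ) : ℝ := fderiv ℝ f p (0, 1)

/-- Directional derivative along the direction with angle `θ p`. -/
def dd (θ : ℝ × ℝ → ℝ) (f : ℝ × ℝ → ℝ) (p : ℝ × ℝ) : ℝ :=
  Real.cos (θ p) * pdx f p + Real.sin (θ p) * pdy f p

/-- Sound speed `c = √(γ s ρ^(γ-1))`. -/
def sound (γ : ℝ) (ρ s : ℝ × ℝ → ℝ) (p : ℝ × ℝ) : ℝ :=
  Real.sqrt (γ * s p * ρ p ^ (γ - 1))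

/-- Flow speed `q = √(u² + v²)`. -/
def speed (u v : ℝ × ℝ → ℝ) (p : ℝ × ℝ) : ℝ :=
  Real.sqrt (u p ^ 2 + v p ^ 2)

/-- Vorticity `ω = u_y − vₓ`. -/
def vort (u v : ℝ × ℝ → ℝ) (p : ℝ × ℝ) : ℝ := pdy u p - pdx v p

/-- `j = c/(γ(γ−1)s)`. -/
def jay (γ : ℝ) (ρ s : ℝ × ℝ → ℝ) (p : ℝ × ℝ) : ℝ :=
  sound γ ρ s p / (γ * (γ - 1) * s p)


private lemma pd_diff {f : ℝ × ℝ → ℝ} {p : ℝ × ℝ} (hf : ContDiffAt ℝ 2 f p) (w₀ : ℝ × ℝ) :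
    DifferentiableAt ℝ (fun q => fderiv ℝ f q w₀) p := by
  have h1 : DifferentiableAt ℝ (fderiv ℝ f) p :=
    (hf.fderiv_right (m := 1) (by norm_num)).differentiableAt (by norm_num)
  exact h1.clm_apply (differentiableAt_const _)

private lemma pd_fderiv {f : ℝ × ℝ → ℝ} {p : ℝ × ℝ} (hf : ContDiffAt ℝ 2 f p)
    (w₀ w : ℝ × ℝ) :
    fderiv ℝ (fun q => fderiv ℝ f q w₀) p w = fderiv ℝ (fderiv ℝ f) p w w₀ := by
  have h1 : DifferentiableAt ℝ (fderiv ℝ f) p :=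
    (hf.fderiv_right (m := 1) (by norm_num)).differentiableAt (by norm_num)
  rw [fderiv_clm_apply h1 (differentiableAt_const _)]
  simp

private lemma pd_symm {f : ℝ × ℝ → ℝ} {p : ℝ × ℝ} (hf : ContDiffAt ℝ 2 f p) (v w : ℝ × ℝ) :
    fderiv ℝ (fderiv ℝ f) p v w = fderiv ℝ (fderiv ℝ f) p w v := by
  have hev : ∀ᶠ y in nhds p, HasFDerivAt f (fderiv ℝ f y) y := by
    filter_upwards [hf.eventually (by norm_num)] with y hy
    exact (hy.differentiableAt (by norm_num)).hasFDerivAt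
  have hx : HasFDerivAt (fderiv ℝ f) (fderiv ℝ (fderiv ℝ f) p) p :=
    ((hf.fderiv_right (m := 1) (by norm_num)).differentiableAt (by norm_num)).hasFDerivAt
  exact second_derivative_symmetric_of_eventually hev hx v w

private lemma algebra_key (γ up vp rp sp ux uy vx vy rx ry sx sy c q cσ sσ sA cA cα sα X
    Mu Mv uyy vxx Px Py MP cx cy : ℝ)
    (hγ : 1 < γ) (hrp : 0 < rp) (hsp : 0 < sp) (hc : 0 < c) (hq : 0 < q)
    (hc2 : c ^ 2 = γ * sp * (X * rp))
    (hq2 : q ^ 2 = up ^ 2 + vp ^ 2)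
    (hcσ : up = q * cσ) (hsσ : vp = q * sσ) (hsA : c = q * sA)
    (hcα : cα = cσ * cA - sσ * sA) (hsα : sα = sσ * cA + cσ * sA)
    (hmass : rx * up + rp * ux + (ry * vp + rp * vy) = 0)
    (hent : up * sx + vp * sy = 0)
    (hPx : Px = sx * (X * rp ^ 2) + γ * sp * (X * rp) * rx)
    (hPy : Py = sy * (X * rp ^ 2) + γ * sp * (X * rp) * ry)
    (hcurl1 : rp ^ 2 * (uy * ux + up * Mu + vy * uy + vp * uyy) - ry * Px + rp * MP = 0)
    (hcurl2 : rp ^ 2 * (ux * vx + up * vxx + vx * vy + vp * Mv) - rx * Py + rp * MP = 0)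
    (hcx : 2 * c * cx = γ * sx * (X * rp) + γ * sp * ((γ - 1) * X) * rx)
    (hcy : 2 * c * cy = γ * sy * (X * rp) + γ * sp * ((γ - 1) * X) * ry) :
    cσ * (Mu - vxx) + sσ * (uyy - Mv) =
      2 / (γ - 1) * (uy - vx) / c * (cσ * cx + sσ * cy) -
      2 * (c / (γ * (γ - 1) * sp)) * (cα * sx + sα * sy) / c * (cσ * cx + sσ * cy) := by
  have hγ0 : γ ≠ 0 := by positivity
  have hγ1 : γ - 1 ≠ 0 := sub_ne_zero.mpr (ne_of_gt hγ)
  have hc0 : c ≠ 0 := ne_of_gt hc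
  have hq0 : q ≠ 0 := ne_of_gt hq
  have hrp0 : rp ≠ 0 := ne_of_gt hrp
  have hsp0 : sp ≠ 0 := ne_of_gt hsp
  have s3 : q * (cσ * (Mu - vxx) + sσ * (uyy - Mv)) = up * (Mu - vxx) + vp * (uyy - Mv) := by
    linear_combination (-(Mu - vxx)) * hcσ - (uyy - Mv) * hsσ
  have s1 : rp ^ 2 * (up * (Mu - vxx) + vp * (uyy - Mv)) =
      rp * (uy - vx) * (up * rx + vp * ry) - X * rp ^ 2 * (rx * sy - ry * sx) := by
    linear_combination hcurl1 - hcurl2 - rp * (uy - vx) * hmass + ry * hPx - rx * hPy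
  have s2 : q ^ 2 * (rx * sy - ry * sx) = (up * sy - vp * sx) * (up * rx + vp * ry) := by
    linear_combination (rx * sy - ry * sx) * hq2 - (up * ry - vp * rx) * hent
  have hG : cσ * cx + sσ * cy = γ * sp * ((γ - 1) * X) * (up * rx + vp * ry) / (2 * c * q) := by
    rw [eq_div_iff (by positivity)]
    linear_combination (-2 * c * cx) * hcσ + (-2 * c * cy) * hsσ + up * hcx + vp * hcy +
      γ * X * rp * hent
  have hS : cα * sx + sα * sy = c * (up * sy - vp * sx) / q ^ 2 := by
    rw [eq_div_iff (by positivity)]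
    linear_combination q ^ 2 * sx * hcα + q ^ 2 * sy * hsα + q * cA * hent -
      q * cA * sx * hcσ - q * cA * sy * hsσ - q * sA * sy * hcσ + q * sA * sx * hsσ -
      (up * sy - vp * sx) * hsA
  have hL : cσ * (Mu - vxx) + sσ * (uyy - Mv) =
      (γ * sp * X * ((uy - vx) * (up * rx + vp * ry)) * q ^ 2 -
        X * ((up * sy - vp * sx) * (up * rx + vp * ry)) * c ^ 2) / (c ^ 2 * q ^ 3) := by
    rw [eq_div_iff (by positivity)]
    have key : (cσ * (Mu - vxx) + sσ * (uyy - Mv)) * (c ^ 2 * q ^ 3) * rp ^ 2 =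
        (γ * sp * X * ((uy - vx) * (up * rx + vp * ry)) * q ^ 2 -
          X * ((up * sy - vp * sx) * (up * rx + vp * ry)) * c ^ 2) * rp ^ 2 := by
      linear_combination (c ^ 2 * q ^ 2 * rp ^ 2) * s3 + (c ^ 2 * q ^ 2) * s1 -
        (c ^ 2 * X * rp ^ 2) * s2 +
        (q ^ 2 * rp * ((uy - vx) * (up * rx + vp * ry))) * hc2
    have := mul_right_cancel₀ (pow_ne_zero 2 hrp0) key
    linarith [this]
  rw [hL, hG, hS]
  field_simp
set_option maxHeartbeats 1000000 in
/-- along stream characteristics the vorticity satisfies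
`∂₀ω = (κω/c) ∂₀c − (2j ∂₊s / c) ∂₀c`, with `κ = 2/(γ−1)`, `j = c/(γ(γ−1)s)`. -/
theorem stmt_15 (γ : ℝ) (hγ : 1 < γ) (U : Set (ℝ × ℝ)) (hU : IsOpen U)
    (u v ρ s σ A : ℝ × ℝ → ℝ)
    (hu : ContDiffOn ℝ 2 u U) (hv : ContDiffOn ℝ 2 v U)
    (hρ : ContDiffOn ℝ 2 ρ U) (hs : ContDiffOn ℝ 2 s U)
    (hσ : ContDiffOn ℝ 1 σ U) (hA : ContDiffOn ℝ 1 A U)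
    (hρpos : ∀ p ∈ U, 0 < ρ p) (hspos : ∀ p ∈ U, 0 < s p)
    (hmass : ∀ p ∈ U, pdx (fun q => ρ q * u q) p + pdy (fun q => ρ q * v q) p = 0)
    (hmomx : ∀ p ∈ U,
      u p * pdx u p + v p * pdy u p + (ρ p)⁻¹ * pdx (fun q => s q * ρ q ^ γ) p = 0)
    (hmomy : ∀ p ∈ U,
      u p * pdx v p + v p * pdy v p + (ρ p)⁻¹ * pdy (fun q => s q * ρ q ^ γ) p = 0)
    (hent : ∀ p ∈ U, u p * pdx s p + v p * pdy s p = 0)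
    (hsup : ∀ p ∈ U, (sound γ ρ s p) ^ 2 < u p ^ 2 + v p ^ 2)
    (huσ : ∀ p ∈ U, u p = speed u v p * Real.cos (σ p))
    (hvσ : ∀ p ∈ U, v p = speed u v p * Real.sin (σ p))
    (hsinA : ∀ p ∈ U, Real.sin (A p) = sound γ ρ s p / speed u v p)
    (hA0 : ∀ p ∈ U, 0 < A p) (hA2 : ∀ p ∈ U, A p < Real.pi / 2)
    :
    ∀ p ∈ U,
      dd σ (vort u v) p =
        (2 / (γ - 1)) * vort u v p / sound γ ρ s p * dd σ (sound γ ρ s) p -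
        2 * jay γ ρ s p * dd (fun r => σ r + A r) s p / sound γ ρ s p *
          dd σ (sound γ ρ s) p := by
  intro p hp
  have hu2 : ContDiffAt ℝ 2 u p := hu.contDiffAt (hU.mem_nhds hp)
  have hv2 : ContDiffAt ℝ 2 v p := hv.contDiffAt (hU.mem_nhds hp)
  have hρ2 : ContDiffAt ℝ 2 ρ p := hρ.contDiffAt (hU.mem_nhds hp)
  have hs2 : ContDiffAt ℝ 2 s p := hs.contDiffAt (hU.mem_nhds hp)
  have hrp : 0 < ρ p := hρpos p hp
  have hsp : 0 < s p := hspos p hp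
  have hrp0 : ρ p ≠ 0 := ne_of_gt hrp
  have hP2 : ContDiffAt ℝ 2 (fun q => s q * ρ q ^ γ) p :=
    hs2.mul (hρ2.rpow_const_of_ne hrp0)
  have du : DifferentiableAt ℝ u p := hu2.differentiableAt (by norm_num)
  have dv : DifferentiableAt ℝ v p := hv2.differentiableAt (by norm_num)
  have dρ : DifferentiableAt ℝ ρ p := hρ2.differentiableAt (by norm_num)
  have ds : DifferentiableAt ℝ s p := hs2.differentiableAt (by norm_num)
  have dinv : DifferentiableAt ℝ (fun z => (ρ z)⁻¹) p := dρ.inv hrp0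
  have hρF : HasFDerivAt ρ (fderiv ℝ ρ p) p := dρ.hasFDerivAt
  have hsF : HasFDerivAt s (fderiv ℝ s p) p := ds.hasFDerivAt
  -- rpow splittings
  have hsplit1 : ρ p ^ (γ - 1) = ρ p ^ (γ - 2) * ρ p := by
    rw [show γ - 1 = γ - 2 + 1 by ring, Real.rpow_add_one hrp0]
  have hsplit2 : ρ p ^ γ = ρ p ^ (γ - 2) * ρ p ^ 2 := by
    rw [show γ = γ - 2 + 1 + 1 by ring, Real.rpow_add_one hrp0, Real.rpow_add_one hrp0]
    ring
  -- sound speed basics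
  have hApos : 0 < γ * s p * ρ p ^ (γ - 1) :=
    mul_pos (mul_pos (by linarith) hsp) (Real.rpow_pos_of_pos hrp _)
  have hc : 0 < sound γ ρ s p := Real.sqrt_pos.mpr hApos
  have hc0 : sound γ ρ s p ≠ 0 := ne_of_gt hc
  have hc2 : sound γ ρ s p ^ 2 = γ * s p * (ρ p ^ (γ - 2) * ρ p) := by
    rw [sound, Real.sq_sqrt hApos.le, hsplit1]
  -- speed basics
  have hq2pos : 0 < u p ^ 2 + v p ^ 2 := lt_of_le_of_lt (sq_nonneg _) (hsup p hp)
  have hq : 0 < speed u v p := Real.sqrt_pos.mpr hq2pos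
  have hq0 : speed u v p ≠ 0 := ne_of_gt hq
  have hq2 : speed u v p ^ 2 = u p ^ 2 + v p ^ 2 := Real.sq_sqrt hq2pos.le
  have hsA : sound γ ρ s p = speed u v p * Real.sin (A p) := by
    rw [hsinA p hp]; field_simp
  -- P := s * ρ^γ and its first derivative at p
  have hrpowF : HasFDerivAt (fun q => ρ q ^ γ) ((γ * ρ p ^ (γ - 1)) • fderiv ℝ ρ p) p := by
    have h := Real.hasDerivAt_rpow_const (x := ρ p) (p := γ) (Or.inl hrp0)
    exact h.comp_hasFDerivAt p hρF
  have hPF : HasFDerivAt (fun q => s q * ρ q ^ γ)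
      (s p • ((γ * ρ p ^ (γ - 1)) • fderiv ℝ ρ p) + (ρ p ^ γ) • fderiv ℝ s p) p :=
    hsF.mul hrpowF
  have hPxval : ∀ w : ℝ × ℝ, fderiv ℝ (fun q => s q * ρ q ^ γ) p w =
      fderiv ℝ s p w * (ρ p ^ (γ - 2) * ρ p ^ 2) +
        γ * s p * (ρ p ^ (γ - 2) * ρ p) * fderiv ℝ ρ p w := by
    intro w
    rw [hPF.fderiv]
    simp only [ContinuousLinearMap.add_apply, ContinuousLinearMap.smul_apply, smul_eq_mul]
    rw [hsplit2, hsplit1]; ring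
  -- sound derivative at p
  have hE1 : HasFDerivAt (fun q => γ * s q) (γ • fderiv ℝ s p) p := hsF.const_mul γ
  have hE2 : HasFDerivAt (fun q => ρ q ^ (γ - 1))
      (((γ - 1) * ρ p ^ (γ - 1 - 1)) • fderiv ℝ ρ p) p := by
    have h := Real.hasDerivAt_rpow_const (x := ρ p) (p := γ - 1) (Or.inl hrp0)
    exact h.comp_hasFDerivAt p hρF
  have hEF : HasFDerivAt (fun q => γ * s q * ρ q ^ (γ - 1))
      ((γ * s p) • (((γ - 1) * ρ p ^ (γ - 1 - 1)) • fderiv ℝ ρ p) +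
        (ρ p ^ (γ - 1)) • (γ • fderiv ℝ s p)) p := hE1.mul hE2
  have hcF : HasFDerivAt (sound γ ρ s)
      ((1 / (2 * Real.sqrt (γ * s p * ρ p ^ (γ - 1)))) •
        ((γ * s p) • (((γ - 1) * ρ p ^ (γ - 1 - 1)) • fderiv ℝ ρ p) +
          (ρ p ^ (γ - 1)) • (γ • fderiv ℝ s p))) p := by
    have h := Real.hasDerivAt_sqrt (ne_of_gt hApos)
    exact h.comp_hasFDerivAt p hEF
  have hsqrtc : Real.sqrt (γ * s p * ρ p ^ (γ - 1)) = sound γ ρ s p := rfl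
  have hcval : ∀ w : ℝ × ℝ, 2 * sound γ ρ s p * fderiv ℝ (sound γ ρ s) p w =
      γ * fderiv ℝ s p w * (ρ p ^ (γ - 2) * ρ p) +
        γ * s p * ((γ - 1) * ρ p ^ (γ - 2)) * fderiv ℝ ρ p w := by
    intro w
    rw [hcF.fderiv]
    simp only [ContinuousLinearMap.add_apply, ContinuousLinearMap.smul_apply, smul_eq_mul,
      hsqrtc]
    rw [show γ - 1 - 1 = γ - 2 by ring, hsplit1]
    field_simp
    ring
  -- mass equation at p
  have hmassval : fderiv ℝ ρ p (1, 0) * u p + ρ p * fderiv ℝ u p (1, 0) +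
      (fderiv ℝ ρ p (0, 1) * v p + ρ p * fderiv ℝ v p (0, 1)) = 0 := by
    have h := hmass p hp
    rw [show pdx (fun q => ρ q * u q) p = fderiv ℝ (fun q => ρ q * u q) p (1, 0) from rfl,
      show pdy (fun q => ρ q * v q) p = fderiv ℝ (fun q => ρ q * v q) p (0, 1) from rfl,
      fderiv_fun_mul dρ du, fderiv_fun_mul dρ dv] at h
    simp only [ContinuousLinearMap.add_apply, ContinuousLinearMap.smul_apply, smul_eq_mul] at h
    linarith
  -- differentiability of first partials
  have dux : DifferentiableAt ℝ (fun z => fderiv ℝ u z (1, 0)) p := pd_diff hu2 (1, 0)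
  have duy : DifferentiableAt ℝ (fun z => fderiv ℝ u z (0, 1)) p := pd_diff hu2 (0, 1)
  have dvx : DifferentiableAt ℝ (fun z => fderiv ℝ v z (1, 0)) p := pd_diff hv2 (1, 0)
  have dvy : DifferentiableAt ℝ (fun z => fderiv ℝ v z (0, 1)) p := pd_diff hv2 (0, 1)
  have dPx : DifferentiableAt ℝ (fun z => fderiv ℝ (fun q => s q * ρ q ^ γ) z (1, 0)) p :=
    pd_diff hP2 (1, 0)
  have dPy : DifferentiableAt ℝ (fun z => fderiv ℝ (fun q => s q * ρ q ^ γ) z (0, 1)) p :=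
    pd_diff hP2 (0, 1)
  have hinvF : fderiv ℝ (fun z => (ρ z)⁻¹) p = -((ρ p ^ 2)⁻¹) • fderiv ℝ ρ p :=
    ((hasDerivAt_inv hrp0).comp_hasFDerivAt p hρF).fderiv
  have einv2 : (ρ p ^ 2)⁻¹ * ρ p ^ 2 = 1 := inv_mul_cancel₀ (pow_ne_zero 2 hrp0)
  have einv1 : (ρ p)⁻¹ * ρ p = 1 := inv_mul_cancel₀ hrp0
  -- curl equation, first momentum eq differentiated in y-direction
  have hF1 : fderiv ℝ (fun z => u z * fderiv ℝ u z (1, 0) + v z * fderiv ℝ u z (0, 1) +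
      (ρ z)⁻¹ * fderiv ℝ (fun q => s q * ρ q ^ γ) z (1, 0)) p = 0 := by
    have hev : (fun z => u z * fderiv ℝ u z (1, 0) + v z * fderiv ℝ u z (0, 1) +
        (ρ z)⁻¹ * fderiv ℝ (fun q => s q * ρ q ^ γ) z (1, 0)) =ᶠ[nhds p]
        (fun _ => (0 : ℝ)) := by
      filter_upwards [hU.mem_nhds hp] with z hz
      exact hmomx z hz
    rw [hev.fderiv_eq]
    simp
  have hcurl1 : u p * fderiv ℝ (fderiv ℝ u) p (0, 1) (1, 0) +
      fderiv ℝ u p (1, 0) * fderiv ℝ u p (0, 1) +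
      (v p * fderiv ℝ (fderiv ℝ u) p (0, 1) (0, 1) +
        fderiv ℝ u p (0, 1) * fderiv ℝ v p (0, 1)) +
      ((ρ p)⁻¹ * fderiv ℝ (fderiv ℝ (fun q => s q * ρ q ^ γ)) p (0, 1) (1, 0) +
        fderiv ℝ (fun q => s q * ρ q ^ γ) p (1, 0) *
          (-(ρ p ^ 2)⁻¹ * fderiv ℝ ρ p (0, 1))) = 0 := by
    have h0 : fderiv ℝ (fun z => u z * fderiv ℝ u z (1, 0) + v z * fderiv ℝ u z (0, 1) +
        (ρ z)⁻¹ * fderiv ℝ (fun q => s q * ρ q ^ γ) z (1, 0)) p (0, 1) = 0 := by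
      rw [hF1]; rfl
    rw [fderiv_fun_add ((du.fun_mul dux).fun_add (dv.fun_mul duy)) (dinv.fun_mul dPx),
      fderiv_fun_add (du.fun_mul dux) (dv.fun_mul duy), fderiv_fun_mul du dux, fderiv_fun_mul dv duy,
      fderiv_fun_mul dinv dPx, hinvF] at h0
    simp only [ContinuousLinearMap.add_apply, ContinuousLinearMap.smul_apply, smul_eq_mul,
      ContinuousLinearMap.neg_apply] at h0
    rw [pd_fderiv hu2 (1, 0) (0, 1), pd_fderiv hu2 (0, 1) (0, 1),
      pd_fderiv hP2 (1, 0) (0, 1)] at h0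
    linarith
  -- curl equation, second momentum eq differentiated in x-direction
  have hF2 : fderiv ℝ (fun z => u z * fderiv ℝ v z (1, 0) + v z * fderiv ℝ v z (0, 1) +
      (ρ z)⁻¹ * fderiv ℝ (fun q => s q * ρ q ^ γ) z (0, 1)) p = 0 := by
    have hev : (fun z => u z * fderiv ℝ v z (1, 0) + v z * fderiv ℝ v z (0, 1) +
        (ρ z)⁻¹ * fderiv ℝ (fun q => s q * ρ q ^ γ) z (0, 1)) =ᶠ[nhds p]
        (fun _ => (0 : ℝ)) := by
      filter_upwards [hU.mem_nhds hp] with z hz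
      exact hmomy z hz
    rw [hev.fderiv_eq]
    simp
  have hcurl2 : u p * fderiv ℝ (fderiv ℝ v) p (1, 0) (1, 0) +
      fderiv ℝ v p (1, 0) * fderiv ℝ u p (1, 0) +
      (v p * fderiv ℝ (fderiv ℝ v) p (1, 0) (0, 1) +
        fderiv ℝ v p (0, 1) * fderiv ℝ v p (1, 0)) +
      ((ρ p)⁻¹ * fderiv ℝ (fderiv ℝ (fun q => s q * ρ q ^ γ)) p (1, 0) (0, 1) +
        fderiv ℝ (fun q => s q * ρ q ^ γ) p (0, 1) *
          (-(ρ p ^ 2)⁻¹ * fderiv ℝ ρ p (1, 0))) = 0 := by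
    have h0 : fderiv ℝ (fun z => u z * fderiv ℝ v z (1, 0) + v z * fderiv ℝ v z (0, 1) +
        (ρ z)⁻¹ * fderiv ℝ (fun q => s q * ρ q ^ γ) z (0, 1)) p (1, 0) = 0 := by
      rw [hF2]; rfl
    rw [fderiv_fun_add ((du.fun_mul dvx).fun_add (dv.fun_mul dvy)) (dinv.fun_mul dPy),
      fderiv_fun_add (du.fun_mul dvx) (dv.fun_mul dvy), fderiv_fun_mul du dvx, fderiv_fun_mul dv dvy,
      fderiv_fun_mul dinv dPy, hinvF] at h0
    simp only [ContinuousLinearMap.add_apply, ContinuousLinearMap.smul_apply, smul_eq_mul,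
      ContinuousLinearMap.neg_apply] at h0
    rw [pd_fderiv hv2 (1, 0) (1, 0), pd_fderiv hv2 (0, 1) (1, 0),
      pd_fderiv hP2 (0, 1) (1, 0)] at h0
    linarith
  -- symmetry facts
  have hsymmu : fderiv ℝ (fderiv ℝ u) p (0, 1) (1, 0) =
      fderiv ℝ (fderiv ℝ u) p (1, 0) (0, 1) := pd_symm hu2 (0, 1) (1, 0)
  have hsymmv : fderiv ℝ (fderiv ℝ v) p (0, 1) (1, 0) =
      fderiv ℝ (fderiv ℝ v) p (1, 0) (0, 1) := pd_symm hv2 (0, 1) (1, 0)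
  have hsymmP : fderiv ℝ (fderiv ℝ (fun q => s q * ρ q ^ γ)) p (0, 1) (1, 0) =
      fderiv ℝ (fderiv ℝ (fun q => s q * ρ q ^ γ)) p (1, 0) (0, 1) :=
    pd_symm hP2 (0, 1) (1, 0)
  -- goal conversion
  have hwx : fderiv ℝ (vort u v) p (1, 0) =
      fderiv ℝ (fderiv ℝ u) p (1, 0) (0, 1) - fderiv ℝ (fderiv ℝ v) p (1, 0) (1, 0) := by
    have : vort u v = fun z => fderiv ℝ u z (0, 1) - fderiv ℝ v z (1, 0) := rfl
    rw [this, fderiv_fun_sub (pd_diff hu2 (0, 1)) (pd_diff hv2 (1, 0))]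
    simp only [ContinuousLinearMap.sub_apply]
    rw [pd_fderiv hu2 (0, 1) (1, 0), pd_fderiv hv2 (1, 0) (1, 0)]
  have hwy : fderiv ℝ (vort u v) p (0, 1) =
      fderiv ℝ (fderiv ℝ u) p (0, 1) (0, 1) - fderiv ℝ (fderiv ℝ v) p (0, 1) (1, 0) := by
    have : vort u v = fun z => fderiv ℝ u z (0, 1) - fderiv ℝ v z (1, 0) := rfl
    rw [this, fderiv_fun_sub (pd_diff hu2 (0, 1)) (pd_diff hv2 (1, 0))]
    simp only [ContinuousLinearMap.sub_apply]
    rw [pd_fderiv hu2 (0, 1) (0, 1), pd_fderiv hv2 (1, 0) (0, 1)]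
  have hvortval : vort u v p = fderiv ℝ u p (0, 1) - fderiv ℝ v p (1, 0) := rfl
  simp only [dd, jay, pdx, pdy]
  rw [hwx, hwy, hvortval, Real.cos_add, Real.sin_add]
  -- now apply the algebraic lemma
  refine algebra_key γ (u p) (v p) (ρ p) (s p) (fderiv ℝ u p (1, 0)) (fderiv ℝ u p (0, 1))
    (fderiv ℝ v p (1, 0)) (fderiv ℝ v p (0, 1)) (fderiv ℝ ρ p (1, 0)) (fderiv ℝ ρ p (0, 1))
    (fderiv ℝ s p (1, 0)) (fderiv ℝ s p (0, 1)) (sound γ ρ s p) (speed u v p)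
    (Real.cos (σ p)) (Real.sin (σ p)) (Real.sin (A p)) (Real.cos (A p))
    (Real.cos (σ p) * Real.cos (A p) - Real.sin (σ p) * Real.sin (A p))
    (Real.sin (σ p) * Real.cos (A p) + Real.cos (σ p) * Real.sin (A p))
    (ρ p ^ (γ - 2))
    (fderiv ℝ (fderiv ℝ u) p (1, 0) (0, 1)) (fderiv ℝ (fderiv ℝ v) p (0, 1) (1, 0))
    (fderiv ℝ (fderiv ℝ u) p (0, 1) (0, 1)) (fderiv ℝ (fderiv ℝ v) p (1, 0) (1, 0))
    (fderiv ℝ (fun q => s q * ρ q ^ γ) p (1, 0))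
    (fderiv ℝ (fun q => s q * ρ q ^ γ) p (0, 1))
    (fderiv ℝ (fderiv ℝ (fun q => s q * ρ q ^ γ)) p (1, 0) (0, 1))
    (fderiv ℝ (sound γ ρ s) p (1, 0)) (fderiv ℝ (sound γ ρ s) p (0, 1))
    hγ hrp hsp hc hq hc2 hq2 (huσ p hp) (hvσ p hp) hsA rfl rfl ?_ (hent p hp) ?_ ?_ ?_ ?_ ?_ ?_
  · linarith [hmassval]
  · have := hPxval (1, 0); linarith [this]
  · have := hPxval (0, 1); linarith [this]
  · -- polynomial curl 1
    have h := hcurl1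
    rw [hsymmu, hsymmP] at h
    linear_combination (ρ p ^ 2) * h -
      (ρ p * fderiv ℝ (fderiv ℝ (fun q => s q * ρ q ^ γ)) p (1, 0) (0, 1)) * einv1 +
      (fderiv ℝ ρ p (0, 1) * fderiv ℝ (fun q => s q * ρ q ^ γ) p (1, 0)) * einv2
  · -- polynomial curl 2
    have h := hcurl2
    rw [← hsymmv] at h
    linear_combination (ρ p ^ 2) * h -
      (ρ p * fderiv ℝ (fderiv ℝ (fun q => s q * ρ q ^ γ)) p (1, 0) (0, 1)) * einv1 +
      (fderiv ℝ ρ p (1, 0) * fderiv ℝ (fun q => s q * ρ q ^ γ) p (0, 1)) * einv2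
  · have := hcval (1, 0); linarith [this]
  · have := hcval (0, 1); linarith [this]

end
end

section
/- Let (u, v, ρ, s) be a C¹ supersonic solution of the smooth-flow 2D steady full Euler system on U, with flow angle σ, Mach angle A ∈ (0, π/2), α = σ + A, β = σ − A, κ = 2/(γ−1), j = c/(γ(γ−1)s). Define R₊ = ∂₊c − (j/κ)∂₊s and R₋ = ∂₋c − (j/κ)∂₋s. Then the flow angle satisfies ∂₀σ = (R₋ − R₊) / ((γ−1)q) on U. -/
open Real

noncomputable section

/-- `R₊ = ∂₊c − (j/κ)∂₊s`, with `κ = 2/(γ−1)`. -/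
def Rplus (γ : ℝ) (u v ρ s σ A : ℝ × ℝ → ℝ) (p : ℝ × ℝ) : ℝ :=
  dd (fun r => σ r + A r) (sound γ ρ s) p -
    (jay γ ρ s p / (2 / (γ - 1))) * dd (fun r => σ r + A r) s p

/-- `R₋ = ∂₋c − (j/κ)∂₋s`, with `κ = 2/(γ−1)`. -/
def Rminus (γ : ℝ) (u v ρ s σ A : ℝ × ℝ → ℝ) (p : ℝ × ℝ) : ℝ :=
  dd (fun r => σ r - A r) (sound γ ρ s) p -
    (jay γ ρ s p / (2 / (γ - 1))) * dd (fun r => σ r - A r) s p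

set_option maxHeartbeats 1000000 in
/-- the flow angle satisfies `∂₀σ = (R₋ − R₊)/((γ−1)q)`. -/
theorem stmt_17 (γ : ℝ) (hγ : 1 < γ) (U : Set (ℝ × ℝ)) (hU : IsOpen U)
    (u v ρ s σ A : ℝ × ℝ → ℝ)
    (hu : ContDiffOn ℝ 1 u U) (hv : ContDiffOn ℝ 1 v U)
    (hρ : ContDiffOn ℝ 1 ρ U) (hs : ContDiffOn ℝ 1 s U)
    (hσ : ContDiffOn ℝ 1 σ U) (hA : ContDiffOn ℝ 1 A U)
    (hρpos : ∀ p ∈ U, 0 < ρ p) (hspos : ∀ p ∈ U, 0 < s p)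
    (hmass : ∀ p ∈ U, pdx (fun q => ρ q * u q) p + pdy (fun q => ρ q * v q) p = 0)
    (hmomx : ∀ p ∈ U,
      u p * pdx u p + v p * pdy u p + (ρ p)⁻¹ * pdx (fun q => s q * ρ q ^ γ) p = 0)
    (hmomy : ∀ p ∈ U,
      u p * pdx v p + v p * pdy v p + (ρ p)⁻¹ * pdy (fun q => s q * ρ q ^ γ) p = 0)
    (hent : ∀ p ∈ U, u p * pdx s p + v p * pdy s p = 0)
    (hsup : ∀ p ∈ U, (sound γ ρ s p) ^ 2 < u p ^ 2 + v p ^ 2)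
    (huσ : ∀ p ∈ U, u p = speed u v p * Real.cos (σ p))
    (hvσ : ∀ p ∈ U, v p = speed u v p * Real.sin (σ p))
    (hsinA : ∀ p ∈ U, Real.sin (A p) = sound γ ρ s p / speed u v p)
    (hA0 : ∀ p ∈ U, 0 < A p) (hA2 : ∀ p ∈ U, A p < Real.pi / 2)
    :
    ∀ p ∈ U,
      dd σ σ p =
        (Rminus γ u v ρ s σ A p - Rplus γ u v ρ s σ A p) / ((γ - 1) * speed u v p) := by
  intro p hp
  have hpU : U ∈ nhds p := hU.mem_nhds hp
  have hρp := hρpos p hp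
  have hsp := hspos p hp
  have hρne : ρ p ≠ 0 := ne_of_gt hρp
  have hsne : s p ≠ 0 := ne_of_gt hsp
  have hγ0 : (0:ℝ) < γ := by linarith
  have hγ0ne : γ ≠ 0 := ne_of_gt hγ0
  have hγ1ne : γ - 1 ≠ 0 := by intro h; apply absurd hγ; linarith [sub_eq_zero.mp h]
  have hEpos : 0 < ρ p ^ (γ - 1) := Real.rpow_pos_of_pos hρp _
  have hwpos : 0 < γ * s p * ρ p ^ (γ - 1) := by positivity
  have hwne : γ * s p * ρ p ^ (γ - 1) ≠ 0 := ne_of_gt hwpos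
  have hcpos : 0 < sound γ ρ s p := Real.sqrt_pos.mpr hwpos
  have hcne : sound γ ρ s p ≠ 0 := ne_of_gt hcpos
  have hc2 : sound γ ρ s p ^ 2 = γ * s p * ρ p ^ (γ - 1) := Real.sq_sqrt hwpos.le
  have hq2pos : 0 < u p ^ 2 + v p ^ 2 := lt_trans (pow_pos hcpos 2) (hsup p hp)
  have hqpos : 0 < speed u v p := Real.sqrt_pos.mpr hq2pos
  have hqne : speed u v p ≠ 0 := ne_of_gt hqpos
  -- differentiability
  have du : DifferentiableAt ℝ u p := (hu.contDiffAt hpU).differentiableAt one_ne_zero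
  have dv : DifferentiableAt ℝ v p := (hv.contDiffAt hpU).differentiableAt one_ne_zero
  have dρ : DifferentiableAt ℝ ρ p := (hρ.contDiffAt hpU).differentiableAt one_ne_zero
  have ds : DifferentiableAt ℝ s p := (hs.contDiffAt hpU).differentiableAt one_ne_zero
  have dσ : DifferentiableAt ℝ σ p := (hσ.contDiffAt hpU).differentiableAt one_ne_zero
  -- derivative of the identity u sin σ - v cos σ = 0
  have hsinσ : HasFDerivAt (fun r => Real.sin (σ r)) (Real.cos (σ p) • fderiv ℝ σ p) p :=
    (Real.hasDerivAt_sin (σ p)).comp_hasFDerivAt p dσ.hasFDerivAt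
  have hcosσ : HasFDerivAt (fun r => Real.cos (σ r)) ((-Real.sin (σ p)) • fderiv ℝ σ p) p :=
    (Real.hasDerivAt_cos (σ p)).comp_hasFDerivAt p dσ.hasFDerivAt
  have hzero : HasFDerivAt (fun r => u r * Real.sin (σ r) - v r * Real.cos (σ r))
      (0 : (ℝ × ℝ) →L[ℝ] ℝ) p := by
    have h0 : HasFDerivAt (fun _ : ℝ × ℝ => (0:ℝ)) (0 : (ℝ × ℝ) →L[ℝ] ℝ) p :=
      hasFDerivAt_const (0:ℝ) p
    apply h0.congr_of_eventuallyEq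
    filter_upwards [hpU] with r hr
    rw [huσ r hr, hvσ r hr]; ring
  have hform : HasFDerivAt (fun r => u r * Real.sin (σ r) - v r * Real.cos (σ r))
      ((u p • (Real.cos (σ p) • fderiv ℝ σ p) + Real.sin (σ p) • fderiv ℝ u p) -
       (v p • ((-Real.sin (σ p)) • fderiv ℝ σ p) + Real.cos (σ p) • fderiv ℝ v p)) p :=
    (du.hasFDerivAt.mul hsinσ).sub (dv.hasFDerivAt.mul hcosσ)
  have hkey := hform.unique hzero
  have hσe : ∀ e : ℝ × ℝ, speed u v p * fderiv ℝ σ p e =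
      Real.cos (σ p) * fderiv ℝ v p e - Real.sin (σ p) * fderiv ℝ u p e := by
    intro e
    have h2 := DFunLike.congr_fun hkey e
    simp only [ContinuousLinearMap.sub_apply, ContinuousLinearMap.add_apply,
      ContinuousLinearMap.smul_apply, smul_eq_mul, ContinuousLinearMap.zero_apply] at h2
    linear_combination h2 - Real.cos (σ p) * fderiv ℝ σ p e * huσ p hp
      - Real.sin (σ p) * fderiv ℝ σ p e * hvσ p hp
      - speed u v p * fderiv ℝ σ p e * Real.sin_sq_add_cos_sq (σ p)
  have hσx : speed u v p * pdx σ p = Real.cos (σ p) * pdx v p - Real.sin (σ p) * pdx u p :=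
    hσe (1, 0)
  have hσy : speed u v p * pdy σ p = Real.cos (σ p) * pdy v p - Real.sin (σ p) * pdy u p :=
    hσe (0, 1)
  -- derivative of the pressure s ρ^γ
  have hρpow : HasFDerivAt (fun r => ρ r ^ γ) ((γ * ρ p ^ (γ - 1)) • fderiv ℝ ρ p) p :=
    dρ.hasFDerivAt.rpow_const (Or.inl hρne)
  have hPder : HasFDerivAt (fun r => s r * ρ r ^ γ)
      (s p • ((γ * ρ p ^ (γ - 1)) • fderiv ℝ ρ p) + (ρ p ^ γ) • fderiv ℝ s p) p :=
    ds.hasFDerivAt.mul hρpow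
  have hPx : pdx (fun q => s q * ρ q ^ γ) p
      = s p * (γ * ρ p ^ (γ - 1) * pdx ρ p) + ρ p ^ γ * pdx s p := by
    simp only [pdx, hPder.fderiv, ContinuousLinearMap.add_apply,
      ContinuousLinearMap.smul_apply, smul_eq_mul]
  have hPy : pdy (fun q => s q * ρ q ^ γ) p
      = s p * (γ * ρ p ^ (γ - 1) * pdy ρ p) + ρ p ^ γ * pdy s p := by
    simp only [pdy, hPder.fderiv, ContinuousLinearMap.add_apply,
      ContinuousLinearMap.smul_apply, smul_eq_mul]
  -- derivative of the sound speed
  have hρpow1 : HasFDerivAt (fun r => ρ r ^ (γ - 1))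
      (((γ - 1) * ρ p ^ (γ - 1 - 1)) • fderiv ℝ ρ p) p :=
    dρ.hasFDerivAt.rpow_const (Or.inl hρne)
  have hwder : HasFDerivAt (fun r => γ * s r * ρ r ^ (γ - 1))
      ((γ * s p) • (((γ - 1) * ρ p ^ (γ - 1 - 1)) • fderiv ℝ ρ p)
        + (ρ p ^ (γ - 1)) • (γ • fderiv ℝ s p)) p :=
    (ds.hasFDerivAt.const_mul γ).mul hρpow1
  have hsound : HasFDerivAt (sound γ ρ s)
      ((1 / (2 * Real.sqrt (γ * s p * ρ p ^ (γ - 1)))) •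
        ((γ * s p) • (((γ - 1) * ρ p ^ (γ - 1 - 1)) • fderiv ℝ ρ p)
          + (ρ p ^ (γ - 1)) • (γ • fderiv ℝ s p))) p :=
    (Real.hasDerivAt_sqrt hwne).comp_hasFDerivAt p hwder
  have hcx : pdx (sound γ ρ s) p = (1 / (2 * sound γ ρ s p)) *
      ((γ * s p) * ((γ - 1) * ρ p ^ (γ - 1 - 1) * pdx ρ p)
        + ρ p ^ (γ - 1) * (γ * pdx s p)) := by
    simp only [pdx, hsound.fderiv, ContinuousLinearMap.add_apply,
      ContinuousLinearMap.smul_apply, smul_eq_mul, sound]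
  have hcy : pdy (sound γ ρ s) p = (1 / (2 * sound γ ρ s p)) *
      ((γ * s p) * ((γ - 1) * ρ p ^ (γ - 1 - 1) * pdy ρ p)
        + ρ p ^ (γ - 1) * (γ * pdy s p)) := by
    simp only [pdy, hsound.fderiv, ContinuousLinearMap.add_apply,
      ContinuousLinearMap.smul_apply, smul_eq_mul, sound]
  -- rpow identities
  have hE2 : ρ p ^ (γ - 1 - 1) = ρ p ^ (γ - 1) / ρ p := Real.rpow_sub_one hρne _
  have hEγ : ρ p ^ γ = ρ p ^ (γ - 1) * ρ p := by
    have h := Real.rpow_add_one hρne (γ - 1)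
    rwa [sub_add_cancel] at h
  have hE : ρ p ^ (γ - 1) = sound γ ρ s p ^ 2 / (γ * s p) := by
    rw [hc2]; field_simp
  -- momentum, cleared of inverses
  have Hmx : ρ p * (u p * pdx u p + v p * pdy u p) + pdx (fun q => s q * ρ q ^ γ) p = 0 := by
    have h := hmomx p hp
    linear_combination ρ p * h - pdx (fun q => s q * ρ q ^ γ) p * mul_inv_cancel₀ hρne
  have Hmy : ρ p * (u p * pdx v p + v p * pdy v p) + pdy (fun q => s q * ρ q ^ γ) p = 0 := by
    have h := hmomy p hp
    linear_combination ρ p * h - pdy (fun q => s q * ρ q ^ γ) p * mul_inv_cancel₀ hρne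
  -- key identity: transport equation for σ
  have key : Real.cos (σ p) * pdx σ p + Real.sin (σ p) * pdy σ p =
      (Real.sin (σ p) * pdx (fun q => s q * ρ q ^ γ) p
        - Real.cos (σ p) * pdy (fun q => s q * ρ q ^ γ) p) / (ρ p * speed u v p ^ 2) := by
    rw [eq_div_iff (by positivity)]
    linear_combination (ρ p * speed u v p * Real.cos (σ p)) * hσx
      + (ρ p * speed u v p * Real.sin (σ p)) * hσy
      - Real.sin (σ p) * Hmx + Real.cos (σ p) * Hmy
      + (ρ p * (Real.sin (σ p) * pdx u p - Real.cos (σ p) * pdx v p)) * huσ p hp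
      + (ρ p * (Real.sin (σ p) * pdy u p - Real.cos (σ p) * pdy v p)) * hvσ p hp
  -- now the main computation
  simp only [dd, Rminus, Rplus, jay]
  rw [key]
  simp only [Real.cos_add, Real.sin_add, Real.cos_sub, Real.sin_sub, hsinA p hp,
    hcx, hcy, hPx, hPy, hE2, hEγ, hE]
  field_simp
  ring


end
end
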